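/- For every integer n ≥ 3 and every integer l ≥ 1, the rational number 2^{⌊n/2⌋} · (n+1) · C(l+n, l−1) · n / (l·(l+n)) is a positive integer. -/

import Mathlib

lemma RS_key (n k : ℕ) (hn : 1 ≤ n) :
    (n + 1) * n * ((k + n + 1).choose k) = (k + 1) * (k + n + 1) * ((k + n).choose (k + 1)) := by
  have h1 : (k + n).choose (k + 1) * (k + 1) = (k + n).choose k * n := by
    rw [Nat.choose_succ_right_eq]; congr 1; omega
  have h2 : (k + n + 1) * (k + n).choose k = (k + n + 1).choose (k + 1) * (k + 1) :=
    Nat.add_one_mul_choose_eq (k + n) k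
  have h3 : (k + n + 1).choose (k + 1) * (k + 1) = (k + n + 1).choose k * (n + 1) := by
    rw [Nat.choose_succ_right_eq]; congr 1; omega
  calc (n + 1) * n * ((k + n + 1).choose k)
      = ((k + n + 1).choose k * (n + 1)) * n := by ring
    _ = ((k + n + 1).choose (k + 1) * (k + 1)) * n := by rw [h3]
    _ = ((k + n + 1) * (k + n).choose k) * n := by rw [h2]
    _ = (k + n + 1) * ((k + n).choose k * n) := by ring
    _ = (k + n + 1) * ((k + n).choose (k + 1) * (k + 1)) := by rw [h1]
    _ = (k + 1) * (k + n + 1) * ((k + n).choose (k + 1)) := by ring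

/-- For `n ≥ 3`, `l ≥ 1`, the multiplicity
`2^⌊n/2⌋ · (n+1) · C(l+n, l-1) · n / (l(l+n))` of the second eigenvalue series
of the Rarita–Schwinger operator on `Sⁿ` is a positive integer. -/
theorem RS_multiplicity_second_series_is_posint (n l : ℕ) (hn : 3 ≤ n) (hl : 1 ≤ l) :
    ∃ m : ℤ, 0 < m ∧
      (2 : ℚ) ^ (n / 2) * ((n : ℚ) + 1) * ((l + n).choose (l - 1)) *
          (n : ℚ) / ((l : ℚ) * ((l : ℚ) + (n : ℚ))) = m := by
  obtain ⟨k, rfl⟩ : ∃ k, l = k + 1 := ⟨l - 1, by omega⟩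
  refine ⟨2 ^ (n / 2) * ((k + n).choose (k + 1)), ?_, ?_⟩
  · have := Nat.choose_pos (show k + 1 ≤ k + n by omega)
    positivity
  · have hl0 : ((k : ℚ) + 1) ≠ 0 := by positivity
    have hln0 : ((k : ℚ) + 1 + n) ≠ 0 := by positivity
    have key := RS_key n k (by omega)
    have keyQ : ((n : ℚ) + 1) * n * ((k + n + 1).choose k) =
        ((k : ℚ) + 1) * ((k : ℚ) + n + 1) * ((k + n).choose (k + 1)) := by
      exact_mod_cast congrArg (Nat.cast (R := ℚ)) key
    have hc : (k + 1 + n).choose (k + 1 - 1) = (k + n + 1).choose k := by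
      congr 1 <;> omega
    rw [hc]
    push_cast
    field_simp
    linear_combination keyQ
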